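/- For a multiplicative function f, prime p, α ≥ 1, 0 ≤ a ≤ α, and positive integer ν coprime to p: Σ_{1≤k≤p^α ν, v_p(k) ≥ α−a} f(gcd(k, p^α ν)) = (Σ_{b=0}^{a} f(p^{α−b}) φ(p^b)) · Σ_{k=1}^{ν} f(gcd(k,ν)). -/

import Mathlib

open Finset

lemma sum_gcd_aux (h : ℕ → ℂ) (n : ℕ) (hn : 0 < n) :
    ∑ k ∈ Finset.Icc 1 n, h (Nat.gcd n k) =
      ∑ d ∈ n.divisors, h d * (Nat.totient (n / d) : ℂ) := by
  have h1 : Finset.Icc 1 n = insert n (Finset.Ico 1 n) := by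
    rw [Finset.Ico_insert_right hn]
  have h2 : Finset.range n = insert 0 (Finset.Ico 1 n) := by
    ext k; simp only [Finset.mem_range, Finset.mem_insert, Finset.mem_Ico]; omega
  have key : ∑ k ∈ Finset.Icc 1 n, h (Nat.gcd n k) =
      ∑ k ∈ Finset.range n, h (Nat.gcd n k) := by
    rw [h1, h2, Finset.sum_insert (by simp), Finset.sum_insert (by simp)]
    simp [Nat.gcd_self, Nat.gcd_zero_right]
  rw [key, ← Finset.sum_fiberwise_of_maps_to
    (g := fun k => Nat.gcd n k) (t := n.divisors)
    (fun x _ => Nat.mem_divisors.2 ⟨Nat.gcd_dvd_left _ _, hn.ne'⟩)]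
  refine Finset.sum_congr rfl fun d hd => ?_
  have hdvd : d ∣ n := (Nat.mem_divisors.1 hd).1
  have : ∀ k ∈ (Finset.range n).filter (fun k => Nat.gcd n k = d),
      h (Nat.gcd n k) = h d := by
    intro k hk
    rw [(Finset.mem_filter.1 hk).2]
  rw [Finset.sum_congr rfl this, Finset.sum_const, ← Nat.totient_div_of_dvd hdvd]
  simp [mul_comm]

theorem sum_valuation_ge (f : ℕ → ℂ) (hf1 : f 1 = 1)
    (hf : ∀ m n : ℕ, Nat.Coprime m n → f (m * n) = f m * f n)
    (p : ℕ) (hp : p.Prime) (α : ℕ) (hα : 1 ≤ α) (a : ℕ) (ha : a ≤ α)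
    (ν : ℕ) (hν : 0 < ν) (hcop : Nat.Coprime ν p) :
    (∑ k ∈ (Finset.Icc 1 (p ^ α * ν)).filter
        (fun k => α - a ≤ padicValNat p k),
      f (Nat.gcd k (p ^ α * ν))) =
      (∑ b ∈ Finset.range (a + 1), f (p ^ (α - b)) * (Nat.totient (p ^ b) : ℂ)) *
        ∑ k ∈ Finset.Icc 1 ν, f (Nat.gcd k ν) := by
  haveI : Fact p.Prime := ⟨hp⟩
  set n := p ^ α * ν with hn_def
  have hn : 0 < n := Nat.mul_pos (pow_pos hp.pos α) hν
  have hpowdvd : p ^ (α - a) ∣ n := dvd_mul_of_dvd_left (pow_dvd_pow p (Nat.sub_le α a)) ν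
  -- Step 1: rewrite LHS as a sum over Icc 1 n with an `if` on the gcd
  have step1 : (∑ k ∈ (Finset.Icc 1 n).filter (fun k => α - a ≤ padicValNat p k),
      f (Nat.gcd k n)) =
      ∑ k ∈ Finset.Icc 1 n,
        (if p ^ (α - a) ∣ Nat.gcd n k then f (Nat.gcd n k) else 0) := by
    rw [Finset.sum_filter]
    refine Finset.sum_congr rfl fun k hk => ?_
    have hk1 : 1 ≤ k := (Finset.mem_Icc.1 hk).1
    have hiff : (α - a ≤ padicValNat p k) ↔ p ^ (α - a) ∣ Nat.gcd n k := by
      rw [← padicValNat_dvd_iff_le (by omega)]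
      constructor
      · intro hd; exact Nat.dvd_gcd hpowdvd hd
      · intro hd; exact hd.trans (Nat.gcd_dvd_right _ _)
    rw [Nat.gcd_comm k n]
    by_cases hc : α - a ≤ padicValNat p k
    · rw [if_pos hc, if_pos (hiff.1 hc)]
    · rw [if_neg hc, if_neg (fun hh => hc (hiff.2 hh))]
  -- Step 2: apply the gcd-sum lemma
  have step2 : (∑ k ∈ Finset.Icc 1 n,
        (if p ^ (α - a) ∣ Nat.gcd n k then f (Nat.gcd n k) else 0)) =
      ∑ d ∈ n.divisors.filter (fun d => p ^ (α - a) ∣ d),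
        f d * (Nat.totient (n / d) : ℂ) := by
    rw [sum_gcd_aux (fun d => if p ^ (α - a) ∣ d then f d else 0) n hn,
      Finset.sum_filter]
    refine Finset.sum_congr rfl fun d hd => ?_
    by_cases hc : p ^ (α - a) ∣ d <;> simp [hc]
  -- Step 3: rewrite the ν-sum on the RHS
  have step3 : (∑ k ∈ Finset.Icc 1 ν, f (Nat.gcd k ν)) =
      ∑ e ∈ ν.divisors, f e * (Nat.totient (ν / e) : ℂ) := by
    rw [← sum_gcd_aux f ν hν]
    exact Finset.sum_congr rfl fun k _ => by rw [Nat.gcd_comm]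
  rw [step1, step2, step3, Finset.sum_mul_sum,
    ← Finset.sum_product' (Finset.range (a + 1)) ν.divisors
      (fun b e => f (p ^ (α - b)) * ((p ^ b).totient : ℂ) * (f e * ((ν / e).totient : ℂ)))]
  -- Step 4: bijection (b, e) ↦ p^(α-b) * e
  symm
  refine Finset.sum_nbij' (fun be => p ^ (α - be.1) * be.2)
    (fun d => (α - padicValNat p d, d / p ^ padicValNat p d)) ?_ ?_ ?_ ?_ ?_
  · -- pairs map into filtered divisors
    intro be hbe
    obtain ⟨hb, he⟩ := Finset.mem_product.1 hbe
    have hb' : be.1 ≤ a := Nat.lt_succ_iff.1 (Finset.mem_range.1 hb)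
    obtain ⟨hedvd, _⟩ := Nat.mem_divisors.1 he
    refine Finset.mem_filter.2 ⟨Nat.mem_divisors.2 ⟨?_, hn.ne'⟩, ?_⟩
    · exact Nat.mul_dvd_mul (pow_dvd_pow p (by omega)) hedvd
    · exact dvd_mul_of_dvd_left (pow_dvd_pow p (by omega)) _
  · -- divisors map into pairs
    intro d hd
    obtain ⟨hd1, hd2⟩ := Finset.mem_filter.1 hd
    obtain ⟨hdvd, _⟩ := Nat.mem_divisors.1 hd1
    have hd0 : d ≠ 0 := fun h => by
      subst h; exact hn.ne' (Nat.eq_zero_of_zero_dvd hdvd)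
    set c := padicValNat p d with hc_def
    have hcge : α - a ≤ c := (padicValNat_dvd_iff_le hd0).1 hd2
    have hpc : p ^ c ∣ d := pow_padicValNat_dvd
    have hcle : c ≤ α := by
      have h1 : p ^ c ∣ p ^ α * ν := hpc.trans hdvd
      have h2 : Nat.Coprime (p ^ c) ν := (hcop.symm.pow_left c)
      have h3 : p ^ c ∣ p ^ α := (Nat.Coprime.dvd_of_dvd_mul_right h2 h1)
      exact (Nat.pow_dvd_pow_iff_le_right hp.one_lt).1 h3
    have hnot : ¬ p ∣ d / p ^ c := fun hdd =>
      pow_succ_padicValNat_not_dvd (p := p) hd0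
        (by rw [pow_succ]; exact (Nat.dvd_div_iff_mul_dvd hpc).1 hdd)
    have hediv : d / p ^ c ∣ ν := by
      have h1 : d / p ^ c ∣ d := Nat.div_dvd_of_dvd hpc
      have h2 : d / p ^ c ∣ p ^ α * ν := h1.trans hdvd
      have h3 : Nat.Coprime (d / p ^ c) (p ^ α) :=
        Nat.Coprime.pow_right α (Nat.coprime_comm.1
          ((Nat.Prime.coprime_iff_not_dvd hp).2 hnot))
      exact h3.dvd_of_dvd_mul_left h2
    have hle : α - c ≤ a := by omega
    exact Finset.mem_product.2
      ⟨Finset.mem_range.2 (Nat.lt_succ_of_le hle), Nat.mem_divisors.2 ⟨hediv, hν.ne'⟩⟩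
  · -- left inverse (pairs side)
    intro be hbe
    obtain ⟨hb, he⟩ := Finset.mem_product.1 hbe
    have hb' : be.1 ≤ a := Nat.lt_succ_iff.1 (Finset.mem_range.1 hb)
    obtain ⟨hedvd, _⟩ := Nat.mem_divisors.1 he
    have he0 : be.2 ≠ 0 := fun h =>
      hν.ne' (Nat.eq_zero_of_zero_dvd (h ▸ hedvd))
    have hval : padicValNat p (p ^ (α - be.1) * be.2) = α - be.1 := by
      rw [padicValNat.mul (pow_ne_zero _ hp.pos.ne') he0,
        padicValNat.prime_pow (α - be.1),
        padicValNat.eq_zero_of_not_dvd, add_zero]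
      exact fun hpe =>
        Nat.Prime.one_lt hp |>.ne' ((Nat.Coprime.eq_one_of_dvd
          ((Nat.Coprime.coprime_dvd_left hedvd hcop).symm) hpe))
    show (α - padicValNat p (p ^ (α - be.1) * be.2),
        (p ^ (α - be.1) * be.2) / p ^ padicValNat p (p ^ (α - be.1) * be.2)) = be
    rw [hval, Nat.sub_sub_self (le_trans hb' ha), Nat.mul_div_cancel_left _
      (pow_pos hp.pos _)]
  · -- right inverse (divisors side)
    intro d hd
    obtain ⟨hd1, hd2⟩ := Finset.mem_filter.1 hd
    obtain ⟨hdvd, _⟩ := Nat.mem_divisors.1 hd1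
    have hd0 : d ≠ 0 := fun h => by
      subst h; exact hn.ne' (Nat.eq_zero_of_zero_dvd hdvd)
    set c := padicValNat p d with hc_def
    have hpc : p ^ c ∣ d := pow_padicValNat_dvd
    have hcle : c ≤ α := by
      have h1 : p ^ c ∣ p ^ α * ν := hpc.trans hdvd
      have h2 : Nat.Coprime (p ^ c) ν := (hcop.symm.pow_left c)
      have h3 : p ^ c ∣ p ^ α := (Nat.Coprime.dvd_of_dvd_mul_right h2 h1)
      exact (Nat.pow_dvd_pow_iff_le_right hp.one_lt).1 h3
    show p ^ (α - (α - c)) * (d / p ^ c) = d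
    rw [Nat.sub_sub_self hcle, Nat.mul_div_cancel' hpc]
  · -- values agree
    intro be hbe
    obtain ⟨hb, he⟩ := Finset.mem_product.1 hbe
    have hb' : be.1 ≤ a := Nat.lt_succ_iff.1 (Finset.mem_range.1 hb)
    obtain ⟨hedvd, _⟩ := Nat.mem_divisors.1 he
    have he0 : be.2 ≠ 0 := fun h =>
      hν.ne' (Nat.eq_zero_of_zero_dvd (h ▸ hedvd))
    have hcop1 : Nat.Coprime (p ^ (α - be.1)) be.2 :=
      ((Nat.Coprime.coprime_dvd_left hedvd hcop).symm).pow_left _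
    have hfd : f (p ^ (α - be.1) * be.2) = f (p ^ (α - be.1)) * f be.2 :=
      hf _ _ hcop1
    have hndiv : n / (p ^ (α - be.1) * be.2) = p ^ be.1 * (ν / be.2) := by
      rw [hn_def, ← Nat.div_mul_div_comm (pow_dvd_pow p (Nat.sub_le α be.1)) hedvd,
        Nat.pow_div (Nat.sub_le α be.1) hp.pos, Nat.sub_sub_self (le_trans hb' ha)]
    have htot : ((n / (p ^ (α - be.1) * be.2)).totient : ℂ) =
        ((p ^ be.1).totient : ℂ) * ((ν / be.2).totient : ℂ) := by
      rw [hndiv, Nat.totient_mul]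
      · push_cast; ring
      · exact Nat.Coprime.pow_left _
          ((Nat.Coprime.coprime_dvd_left (Nat.div_dvd_of_dvd hedvd) hcop).symm)
    show f (p ^ (α - be.1)) * ((p ^ be.1).totient : ℂ) *
        (f be.2 * ((ν / be.2).totient : ℂ)) =
      f (p ^ (α - be.1) * be.2) * ((n / (p ^ (α - be.1) * be.2)).totient : ℂ)
    rw [hfd, htot]
    ring
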